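/- For any natural number n ≥ 1, G_n = ∑_{k=1}^{n} (-1)^{k-1} · a_k · S(n,k), where G_n are the Genocchi numbers, S(n,k) are the Stirling numbers of the second kind, and a_k = (k!/2^k) · ∑_{j=1}^{k} 2^j/j. -/

import Mathlib

/-- Genocchi numbers, defined by the EGF `2x/(eˣ+1) = ∑ Gₙ xⁿ/n!`. -/
noncomputable def genocchi (n : ℕ) : ℚ :=
  (Nat.factorial n : ℚ) *
    PowerSeries.coeff n (2 * PowerSeries.X * (PowerSeries.exp ℚ + 1)⁻¹)

/-- Stirling numbers of the second kind, via the standard recurrence; these are the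
unique numbers satisfying `X^n = ∑ₖ S(n,k)·X(X-1)⋯(X-k+1)`. -/
def stirlingSnd : ℕ → ℕ → ℕ
  | 0, 0 => 1
  | 0, _ + 1 => 0
  | _ + 1, 0 => 0
  | n + 1, k + 1 => stirlingSnd n k + (k + 1) * stirlingSnd n (k + 1)

section Aux

open PowerSeries Finset

noncomputable def Eexp : ℚ⟦X⟧ := PowerSeries.exp ℚ

lemma deriv_Eexp : d⁄dX ℚ Eexp = Eexp := by
  ext n
  rw [PowerSeries.coeff_derivative, Eexp, PowerSeries.coeff_exp, PowerSeries.coeff_exp]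
  have h : ((n+1).factorial : ℚ) = (n+1) * n.factorial := by
    push_cast [Nat.factorial_succ]; ring
  simp only [Algebra.algebraMap_self, RingHom.id_apply, h]
  have h1 : (n.factorial : ℚ) ≠ 0 := Nat.cast_ne_zero.mpr n.factorial_ne_zero
  have h2 : ((n : ℚ) + 1) ≠ 0 := by positivity
  field_simp

lemma constantCoeff_Eexp_sub_one : constantCoeff (Eexp - 1) = 0 := by
  simp [Eexp, PowerSeries.constantCoeff_exp]

lemma coeff_pow_eq_zero {f : ℚ⟦X⟧} (hf : constantCoeff f = 0) {k n : ℕ} (h : n < k) :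
    PowerSeries.coeff n (f ^ k) = 0 := by
  have hd : (PowerSeries.X : ℚ⟦X⟧) ^ k ∣ f ^ k :=
    pow_dvd_pow_of_dvd (PowerSeries.X_dvd_iff.mpr hf) k
  exact PowerSeries.X_pow_dvd_iff.mp hd n h

lemma deriv_Eexp_sub_one : d⁄dX ℚ (Eexp - 1) = Eexp := by
  rw [map_sub, deriv_Eexp]; simp

lemma stirling_coeff : ∀ n k : ℕ, (n.factorial : ℚ) * PowerSeries.coeff n ((Eexp - 1) ^ k)
    = (k.factorial : ℚ) * stirlingSnd n k := by
  intro n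
  induction n with
  | zero =>
    intro k
    rw [PowerSeries.coeff_zero_eq_constantCoeff, map_pow, constantCoeff_Eexp_sub_one]
    cases k <;> simp [stirlingSnd]
  | succ n ih =>
    intro k
    cases k with
    | zero => simp [stirlingSnd, PowerSeries.coeff_one]
    | succ k =>
      have hD : d⁄dX ℚ ((Eexp - 1) ^ (k + 1))
          = (k + 1 : ℕ) • ((Eexp - 1) ^ (k + 1) + (Eexp - 1) ^ k) := by
        rw [Derivation.leibniz_pow, deriv_Eexp_sub_one]
        have : (Eexp - 1) ^ (k + 1 - 1) • Eexp = (Eexp - 1) ^ (k + 1) + (Eexp - 1) ^ k := by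
          rw [Nat.add_sub_cancel, smul_eq_mul]; ring
        rw [this]
      have hkey := PowerSeries.coeff_derivative ((Eexp - 1) ^ (k + 1)) n
      rw [hD] at hkey
      rw [nsmul_eq_mul, ← map_natCast (PowerSeries.C (R := ℚ)) (k+1), PowerSeries.coeff_C_mul,
        map_add] at hkey
      have e1 := ih (k + 1)
      have e2 := ih k
      have hfac : ((n+1).factorial : ℚ) = (n+1) * n.factorial := by
        push_cast [Nat.factorial_succ]; ring
      have hfac2 : ((k+1).factorial : ℚ) = (k+1) * k.factorial := by
        push_cast [Nat.factorial_succ]; ring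
      have hst : (stirlingSnd (n+1) (k+1) : ℚ)
          = stirlingSnd n k + (k+1) * stirlingSnd n (k+1) := by
        show ((stirlingSnd n k + (k + 1) * stirlingSnd n (k + 1) : ℕ) : ℚ) = _
        push_cast; ring
      rw [hfac, hfac2, hst]
      have : ((n:ℚ)+1) * (n.factorial * PowerSeries.coeff (n+1) ((Eexp-1)^(k+1)))
          = (n.factorial : ℚ) * (PowerSeries.coeff (n+1) ((Eexp-1)^(k+1)) * (n+1)) := by ring
      rw [mul_assoc, this, ← hkey]
      have expand : (n.factorial : ℚ) * (((k:ℚ) + 1) * (PowerSeries.coeff n ((Eexp-1)^(k+1))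
            + PowerSeries.coeff n ((Eexp-1)^k)))
          = ((k:ℚ)+1) * ((n.factorial : ℚ) * PowerSeries.coeff n ((Eexp-1)^(k+1)))
            + ((k:ℚ)+1) * ((n.factorial : ℚ) * PowerSeries.coeff n ((Eexp-1)^k)) := by ring
      push_cast
      rw [expand, e1, e2, hfac2]
      ring

noncomputable def SS (N : ℕ) : ℚ⟦X⟧ := ∑ j ∈ Icc 1 N, ((j : ℚ))⁻¹ • (1 - Eexp) ^ j

lemma constantCoeff_one_sub_Eexp : constantCoeff (1 - Eexp) = 0 := by
  simp [Eexp, PowerSeries.constantCoeff_exp]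

lemma deriv_v : d⁄dX ℚ (1 - Eexp) = -Eexp := by rw [map_sub, deriv_Eexp]; simp

lemma deriv_SS (N : ℕ) : d⁄dX ℚ (SS N) = (1 - Eexp) ^ N - 1 := by
  rw [SS, map_sum]
  have step : ∀ j ∈ Icc 1 N, d⁄dX ℚ (((j : ℚ))⁻¹ • (1 - Eexp) ^ j)
      = (1 - Eexp) ^ (j - 1) * ((1 - Eexp) - 1) := by
    intro j hj
    have hj1 : 1 ≤ j := (mem_Icc.mp hj).1
    have hjne : (j : ℚ) ≠ 0 := Nat.cast_ne_zero.mpr (by omega)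
    rw [Derivation.map_smul, Derivation.leibniz_pow, deriv_v, ← Nat.cast_smul_eq_nsmul ℚ,
      smul_smul, inv_mul_cancel₀ hjne, one_smul, smul_eq_mul]
    ring
  rw [Finset.sum_congr rfl step, ← Finset.Ico_add_one_right_eq_Icc, Finset.sum_Ico_eq_sum_range,
    Nat.add_sub_cancel,
    Finset.sum_congr rfl (fun i _ => by rw [Nat.add_sub_cancel_left]),
    ← Finset.sum_mul, geom_sum_mul]

lemma constantCoeff_SS (N : ℕ) : constantCoeff (SS N) = 0 := by
  rw [SS, map_sum]
  refine Finset.sum_eq_zero fun j hj => ?_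
  have hj1 : 1 ≤ j := (mem_Icc.mp hj).1
  rw [PowerSeries.constantCoeff_smul, map_pow, constantCoeff_one_sub_Eexp,
    zero_pow (by omega), smul_zero]

lemma coeff_SS {N m : ℕ} (hm : m ≤ N) :
    PowerSeries.coeff m (SS N) = -PowerSeries.coeff m (PowerSeries.X : ℚ⟦X⟧) := by
  cases m with
  | zero => simp [PowerSeries.coeff_zero_eq_constantCoeff, constantCoeff_SS]
  | succ m =>
    have h := PowerSeries.coeff_derivative (SS N) m
    rw [deriv_SS, map_sub, coeff_pow_eq_zero constantCoeff_one_sub_Eexp (by omega),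
      zero_sub] at h
    cases m with
    | zero =>
      simp only [PowerSeries.coeff_one, if_pos rfl] at h
      simp only [Nat.cast_zero, zero_add, mul_one] at h
      rw [PowerSeries.coeff_X, if_pos rfl, ← h]
      simp
    | succ m =>
      simp only [PowerSeries.coeff_one, if_neg (Nat.succ_ne_zero m), neg_zero] at h
      have hne : ((m + 1 : ℕ) : ℚ) + 1 ≠ 0 := by positivity
      have hz : PowerSeries.coeff (m + 1 + 1) (SS N) = 0 := by
        rcases mul_eq_zero.mp h.symm with h' | h'
        · exact h'
        · exact absurd h' hne
      rw [hz, PowerSeries.coeff_X, if_neg (by omega), neg_zero]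

noncomputable def tps : ℚ⟦X⟧ := (2:ℚ)⁻¹ • (1 - Eexp)

noncomputable def Fps (N : ℕ) : ℚ⟦X⟧ :=
  ∑ k ∈ Icc 1 N, ((-1:ℚ)^(k-1) * ((2:ℚ)^k)⁻¹ * ∑ j ∈ Icc 1 k, (2:ℚ)^j / (j:ℚ)) • (Eexp - 1)^k

lemma one_sub_pow (k : ℕ) : (1 - Eexp)^k = (2:ℚ)^k • tps^k := by
  rw [tps, smul_pow, smul_smul, ← mul_pow]
  norm_num

lemma Eexp_sub_one_pow (k : ℕ) : (Eexp - 1)^k = ((-2:ℚ))^k • tps^k := by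
  have h : Eexp - 1 = (-2:ℚ) • tps := by
    rw [tps, smul_smul]
    norm_num
  rw [h, smul_pow]

lemma key (N : ℕ) : (1 - tps) * Fps N
    = -SS N + (∑ j ∈ Icc 1 N, (2:ℚ)^j / (j:ℚ)) • tps^(N+1) := by
  induction N with
  | zero => simp [Fps, SS]
  | succ N ih =>
    have hsq : ((-1:ℚ))^N * (-1)^N = 1 := by
      rw [← pow_add, ← two_mul, pow_mul]; norm_num
    have h2ne : ((2:ℚ)^(N+1)) ≠ 0 := by positivity
    have hscal : (-1:ℚ)^(N+1-1) * ((2:ℚ)^(N+1))⁻¹ * (-2:ℚ)^(N+1) = -1 := by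
      have hneg : (-2:ℚ)^(N+1) = (-1:ℚ)^N * -1 * 2^(N+1) := by
        rw [show (-2:ℚ) = -1 * 2 from by norm_num, mul_pow, pow_succ]
      rw [Nat.add_sub_cancel, hneg,
        show (-1:ℚ)^N * ((2:ℚ)^(N+1))⁻¹ * ((-1:ℚ)^N * -1 * 2^(N+1))
          = -(((-1:ℚ)^N * (-1)^N) * ((2:ℚ)^(N+1) * ((2:ℚ)^(N+1))⁻¹)) from by ring,
        hsq, mul_inv_cancel₀ h2ne]
      norm_num
    have h1 : Fps (N+1) = Fps N
        + (-(∑ j ∈ Icc 1 (N+1), (2:ℚ)^j / (j:ℚ))) • tps^(N+1) := by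
      simp only [Fps]
      rw [Finset.sum_Icc_succ_top (by omega : 1 ≤ N+1), Eexp_sub_one_pow, smul_smul]
      congr 2
      linear_combination (∑ j ∈ Icc 1 (N+1), (2:ℚ)^j / (j:ℚ)) * hscal
    have h2 : SS (N+1) = SS N + (((N:ℚ)+1))⁻¹ • (1 - Eexp)^(N+1) := by
      simp only [SS]
      rw [Finset.sum_Icc_succ_top (by omega : 1 ≤ N+1)]
      push_cast
      ring_nf
    have hc : (∑ j ∈ Icc 1 (N+1), (2:ℚ)^j / (j:ℚ))
        = (∑ j ∈ Icc 1 N, (2:ℚ)^j / (j:ℚ)) + 2^(N+1)/((N:ℚ)+1) := by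
      rw [Finset.sum_Icc_succ_top (by omega : 1 ≤ N+1)]
      push_cast
      ring
    rw [h1, mul_add, ih, h2, mul_smul_comm, sub_mul, one_mul, ← pow_succ', one_sub_pow,
      smul_smul, hc]
    have hne : ((N:ℚ)+1) ≠ 0 := by positivity
    match_scalars
    · ring
    · field_simp; ring
    · ring

lemma constantCoeff_tps : constantCoeff tps = 0 := by
  rw [tps, PowerSeries.constantCoeff_smul, constantCoeff_one_sub_Eexp, smul_zero]

lemma key2 {N n : ℕ} (hn : n ≤ N) :
    PowerSeries.coeff n ((Eexp + 1) * Fps N)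
      = PowerSeries.coeff n (2 * PowerSeries.X : ℚ⟦X⟧) := by
  have hE : Eexp + 1 = (2:ℚ) • (1 - tps) := by rw [tps]; module
  rw [hE, smul_mul_assoc, map_smul, key, map_add, map_neg, map_smul, coeff_SS hn,
    coeff_pow_eq_zero constantCoeff_tps (by omega : n < N + 1),
    show (2 : ℚ⟦X⟧) = PowerSeries.C (R := ℚ) 2 from (map_ofNat (PowerSeries.C (R := ℚ)) 2).symm,
    PowerSeries.coeff_C_mul]
  simp

lemma key3 {N n : ℕ} (hn : n ≤ N) :
    PowerSeries.coeff n (2 * PowerSeries.X * (PowerSeries.exp ℚ + 1)⁻¹)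
      = PowerSeries.coeff n (Fps N) := by
  have hconst : constantCoeff (Eexp + 1) ≠ 0 := by
    simp [Eexp, PowerSeries.constantCoeff_exp]
  have hinv : (Eexp + 1)⁻¹ * (Eexp + 1) = 1 := PowerSeries.inv_mul_cancel _ hconst
  set R : ℚ⟦X⟧ := (Eexp + 1) * Fps N - 2 * PowerSeries.X with hRdef
  have hdvd : (PowerSeries.X : ℚ⟦X⟧) ^ (N + 1) ∣ R := by
    rw [PowerSeries.X_pow_dvd_iff]
    intro m hm
    rw [hRdef, map_sub, key2 (by omega : m ≤ N), sub_self]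
  have hsplit : Fps N = (Eexp + 1)⁻¹ * (2 * PowerSeries.X) + (Eexp + 1)⁻¹ * R := by
    rw [hRdef, mul_sub,
      show (Eexp+1)⁻¹ * ((Eexp+1) * Fps N) = ((Eexp+1)⁻¹ * (Eexp+1)) * Fps N from
        (mul_assoc _ _ _).symm, hinv, one_mul]
    ring
  have hzero : PowerSeries.coeff n ((Eexp + 1)⁻¹ * R) = 0 :=
    PowerSeries.X_pow_dvd_iff.mp (hdvd.mul_left _) n (by omega)
  rw [hsplit, map_add, hzero, add_zero, mul_comm]
  rfl

open Finset in
theorem stmt_5' (n : ℕ) (hn : 1 ≤ n) :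
    (Nat.factorial n : ℚ) *
      PowerSeries.coeff n (2 * PowerSeries.X * (PowerSeries.exp ℚ + 1)⁻¹)
    = ∑ k ∈ Finset.Icc 1 n, (-1 : ℚ) ^ (k - 1) *
      (((Nat.factorial k : ℚ) / 2 ^ k) * ∑ j ∈ Finset.Icc 1 k, (2 ^ j / (j : ℚ))) *
      (stirlingSnd n k : ℚ) := by
  rw [key3 (le_refl n), Fps, map_sum, Finset.mul_sum]
  refine Finset.sum_congr rfl fun k _ => ?_
  rw [map_smul, smul_eq_mul]
  have hs := stirling_coeff n k
  calc (n.factorial : ℚ) * ((-1:ℚ)^(k-1) * ((2:ℚ)^k)⁻¹ * (∑ j ∈ Icc 1 k, (2:ℚ)^j / (j:ℚ))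
        * PowerSeries.coeff n ((Eexp - 1)^k))
      = ((-1:ℚ)^(k-1) * ((2:ℚ)^k)⁻¹ * (∑ j ∈ Icc 1 k, (2:ℚ)^j / (j:ℚ)))
        * ((n.factorial : ℚ) * PowerSeries.coeff n ((Eexp - 1)^k)) := by ring
    _ = _ := by rw [hs]; ring


end Aux

open Finset in
theorem stmt_5 (n : ℕ) (hn : 1 ≤ n) :
    genocchi n = ∑ k ∈ Finset.Icc 1 n, (-1 : ℚ) ^ (k - 1) *
      (((Nat.factorial k : ℚ) / 2 ^ k) * ∑ j ∈ Finset.Icc 1 k, (2 ^ j / (j : ℚ))) *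
      (stirlingSnd n k : ℚ) := by
  unfold genocchi
  exact stmt_5' n hn
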